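/- If Z is standard normal and z(u,v) = -ln(D/v)/(σ₁√(u-t)) + α̃√(u-t)/σ₁ + σ₁(1/2 + α/σ₁²)(T-u)/√(u-t), where v > D and 1/2 + α/σ₁² > 0, then z(u,v) > -|α̃|√T/σ₁ for all t < u < T; moreover if additionally z(u,v) ≤ 1 and h = √((T-u)/(u-t)) ≥ 1, then P(z(u,v) - h < Z < z(u,v)) ≥ ε for an explicit ε > 0 depending only on α̃√T/σ₁ (e.g. ε = φ(max(|z|, |z-1|)) evaluated at the worst case), independent of t, u, v. -/
import Mathlib


open MeasureTheory ProbabilityTheory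

/-- The quantity `z(u,v)` from the boundedness proof. -/
noncomputable def zfun (μ₁ σ₁ α D T t u v : ℝ) : ℝ :=
  -Real.log (D / v) / (σ₁ * Real.sqrt (u - t))
    + (μ₁ + 3 / 2 * σ₁ ^ 2) * Real.sqrt (u - t) / σ₁
    + σ₁ * (1 / 2 + α / σ₁ ^ 2) * (T - u) / Real.sqrt (u - t)

theorem zfun_lower_bound_and_gaussian_mass (μ₁ σ₁ α D T : ℝ)
    (hσ₁ : 0 < σ₁) (hD : 0 < D) (hT : 0 < T)
    (hα : 0 < 1 / 2 + α / σ₁ ^ 2) :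
    (∀ t u v : ℝ, 0 ≤ t → t < u → u < T → D < v →
      zfun μ₁ σ₁ α D T t u v >
        -|μ₁ + 3 / 2 * σ₁ ^ 2| * Real.sqrt T / σ₁) ∧
    (∃ ε : ℝ, 0 < ε ∧ ∀ t u v : ℝ, 0 ≤ t → t < u → u < T → D < v →
      zfun μ₁ σ₁ α D T t u v ≤ 1 →
      1 ≤ Real.sqrt ((T - u) / (u - t)) →
      ε ≤ (gaussianReal 0 1 (Set.Ioo
            (zfun μ₁ σ₁ α D T t u v - Real.sqrt ((T - u) / (u - t)))
            (zfun μ₁ σ₁ α D T t u v))).toReal) := by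
  set L : ℝ := -|μ₁ + 3 / 2 * σ₁ ^ 2| * Real.sqrt T / σ₁ with hL
  have hL0 : L ≤ 0 := by
    apply div_nonpos_of_nonpos_of_nonneg _ hσ₁.le
    exact mul_nonpos_of_nonpos_of_nonneg (neg_nonpos.mpr (abs_nonneg _)) (Real.sqrt_nonneg _)
  have h1 : ∀ t u v : ℝ, 0 ≤ t → t < u → u < T → D < v →
      zfun μ₁ σ₁ α D T t u v > L := by
    intro t u v ht htu huT hDv
    have hs : 0 < Real.sqrt (u - t) := Real.sqrt_pos.mpr (by linarith)
    have hA : 0 ≤ -Real.log (D / v) / (σ₁ * Real.sqrt (u - t)) := by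
      apply div_nonneg _ (mul_pos hσ₁ hs).le
      rw [neg_nonneg]
      exact Real.log_nonpos (div_nonneg hD.le (hD.trans hDv).le) (by rw [div_le_one (by linarith)]; linarith)
    have hC : 0 < σ₁ * (1 / 2 + α / σ₁ ^ 2) * (T - u) / Real.sqrt (u - t) := by
      apply div_pos _ hs
      have : 0 < T - u := by linarith
      positivity
    have hB : L ≤ (μ₁ + 3 / 2 * σ₁ ^ 2) * Real.sqrt (u - t) / σ₁ := by
      rw [hL, div_le_div_iff_of_pos_right hσ₁]
      have h2 : Real.sqrt (u - t) ≤ Real.sqrt T := Real.sqrt_le_sqrt (by linarith)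
      have h3 : -|μ₁ + 3 / 2 * σ₁ ^ 2| ≤ μ₁ + 3 / 2 * σ₁ ^ 2 := neg_abs_le _
      nlinarith [abs_nonneg (μ₁ + 3 / 2 * σ₁ ^ 2), hs.le]
    unfold zfun
    linarith
  refine ⟨h1, (Real.sqrt (2 * Real.pi))⁻¹ * Real.exp (-(1 - L) ^ 2 / 2), by positivity,
    fun t u v ht htu huT hDv hz1 hh1 => ?_⟩
  set z := zfun μ₁ σ₁ α D T t u v with hzdef
  set h := Real.sqrt ((T - u) / (u - t)) with hhdef
  set ε : ℝ := (Real.sqrt (2 * Real.pi))⁻¹ * Real.exp (-(1 - L) ^ 2 / 2) with hε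
  have hεpos : 0 < ε := by rw [hε]; positivity
  have hzL : L < z := h1 t u v ht htu huT hDv
  -- pointwise lower bound on the density on Ioo (z-1) z
  have hpdf : ∀ x ∈ Set.Ioo (z - 1) z, ε ≤ gaussianPDFReal 0 1 x := by
    intro x hx
    have hx1 : x < 1 := lt_of_lt_of_le hx.2 hz1
    have hx2 : L - 1 < x := by linarith [hx.1]
    have hxabs : x ^ 2 ≤ (1 - L) ^ 2 := sq_le_sq' (by linarith) (by linarith)
    simp only [gaussianPDFReal, NNReal.coe_one, mul_one, sub_zero]
    have hexp : Real.exp (-(1 - L) ^ 2 / 2) ≤ Real.exp (-x ^ 2 / 2) :=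
      Real.exp_le_exp.mpr (by linarith)
    rw [hε]
    exact mul_le_mul_of_nonneg_left hexp (by positivity)
  have hsub : Set.Ioo (z - 1) z ⊆ Set.Ioo (z - h) z := fun x hx => ⟨by linarith [hx.1], hx.2⟩
  have key : ENNReal.ofReal ε ≤ gaussianReal 0 1 (Set.Ioo (z - 1) z) := by
    rw [gaussianReal_apply 0 one_ne_zero]
    calc ENNReal.ofReal ε = ENNReal.ofReal ε * volume (Set.Ioo (z - 1) z) := by
          rw [Real.volume_Ioo]
          norm_num
      _ = ∫⁻ _ in Set.Ioo (z - 1) z, ENNReal.ofReal ε := (setLIntegral_const _ _).symm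
      _ ≤ ∫⁻ x in Set.Ioo (z - 1) z, gaussianPDF 0 1 x := by
          refine lintegral_mono_ae ?_
          filter_upwards [ae_restrict_mem measurableSet_Ioo] with x hx
          exact ENNReal.ofReal_le_ofReal (hpdf x hx)
  have key2 : ENNReal.ofReal ε ≤ gaussianReal 0 1 (Set.Ioo (z - h) z) :=
    key.trans (measure_mono hsub)
  calc ε = (ENNReal.ofReal ε).toReal := (ENNReal.toReal_ofReal hεpos.le).symm
    _ ≤ _ := ENNReal.toReal_mono (measure_ne_top _ _) key2
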